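/- arXiv:1206.0771 — 3 statements merged into one kernel-verified Lean document; each statement's English description precedes it below -/
import Mathlib

section
/- The intersection of two pinch convex vertex sets is pinch convex. -/
open Finset

variable {V : Type*} [Fintype V] [DecidableEq V]

/-- The total weight of the boundary of `A`: the sum of the weights of the
edges with exactly one endpoint in `A`. -/
def boundarySize (w : V → V → ℝ) (A : Finset V) : ℝ :=
  ∑ u ∈ A, ∑ x ∈ Aᶜ, w u x

/-- The pinchSlope of a vertex `v` with respect to a vertex set `A`: the total
weight of the edges from `v` to the complement of `A` minus the total weight
of the edges from `v` to `A`. -/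
def pinchSlope (w : V → V → ℝ) (A : Finset V) (v : V) : ℝ :=
  ∑ x ∈ Aᶜ, w v x - ∑ x ∈ A, w v x

/-- `A` is pinch convex: for any sequence of vertices outside of `A`, if adding
all of them to `A` strictly decreases the boundary, then adding some proper
initial segment strictly increases the boundary. -/
def PinchConvex (w : V → V → ℝ) (A : Finset V) : Prop :=
  ∀ L : List V, (∀ x ∈ L, x ∉ A) →
    boundarySize w (A ∪ L.toFinset) < boundarySize w A →
    ∃ k < L.length, boundarySize w A < boundarySize w (A ∪ (L.take k).toFinset)

/-- `A` is pinch concave: for any sequence of vertices of `A`, if removing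
all of them from `A` strictly decreases the boundary, then removing some proper
initial segment strictly increases the boundary. -/
def PinchConcave (w : V → V → ℝ) (A : Finset V) : Prop :=
  ∀ L : List V, (∀ x ∈ L, x ∈ A) →
    boundarySize w (A \ L.toFinset) < boundarySize w A →
    ∃ k < L.length, boundarySize w A < boundarySize w (A \ (L.take k).toFinset)

/-- `A` is a pinch cluster: whenever adding a sequence of vertices to `A`, or
removing a sequence of vertices from `A`, strictly decreases the boundary, some
proper initial segment of the sequence strictly increases the boundary. -/
def PinchCluster (w : V → V → ℝ) (A : Finset V) : Prop :=
  (∀ L : List V,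
    boundarySize w (A ∪ L.toFinset) < boundarySize w A →
    ∃ k < L.length, boundarySize w A < boundarySize w (A ∪ (L.take k).toFinset)) ∧
  (∀ L : List V,
    boundarySize w (A \ L.toFinset) < boundarySize w A →
    ∃ k < L.length, boundarySize w A < boundarySize w (A \ (L.take k).toFinset))

lemma boundary_insert (w : V → V → ℝ) (hsym : ∀ u v, w u v = w v u)
    (hdiag : ∀ v, w v v = 0) (S : Finset V) (v : V) (hv : v ∉ S) :
    boundarySize w (insert v S) = boundarySize w S + pinchSlope w S v := by
  unfold boundarySize pinchSlope
  rw [Finset.sum_insert hv, Finset.compl_insert]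
  rw [Finset.sum_erase _ (hdiag v)]
  have hvc : v ∈ Sᶜ := Finset.mem_compl.2 hv
  have h1 : ∀ u ∈ S, ∑ x ∈ Sᶜ.erase v, w u x = ∑ x ∈ Sᶜ, w u x - w u v :=
    fun u _ => Finset.sum_erase_eq_sub hvc
  rw [Finset.sum_congr rfl h1, Finset.sum_sub_distrib]
  have h2 : ∑ u ∈ S, w u v = ∑ u ∈ S, w v u :=
    Finset.sum_congr rfl (fun u _ => hsym u v)
  rw [h2]; ring

lemma slope_mono (w : V → V → ℝ) (hw0 : ∀ u v, 0 ≤ w u v)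
    (X Y : Finset V) (hXY : X ⊆ Y) (v : V) :
    pinchSlope w Y v ≤ pinchSlope w X v := by
  unfold pinchSlope
  have h1 : ∑ x ∈ Yᶜ, w v x ≤ ∑ x ∈ Xᶜ, w v x :=
    Finset.sum_le_sum_of_subset_of_nonneg (Finset.compl_subset_compl.2 hXY)
      (fun x _ _ => hw0 v x)
  have h2 : ∑ x ∈ X, w v x ≤ ∑ x ∈ Y, w v x :=
    Finset.sum_le_sum_of_subset_of_nonneg hXY (fun x _ _ => hw0 v x)
  linarith

lemma union_filter_toFinset (Y : Finset V) (l : List V) :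
    Y ∪ (l.filter (fun x => decide (x ∉ Y))).toFinset = Y ∪ l.toFinset := by
  ext a
  simp only [Finset.mem_union, List.mem_toFinset, List.mem_filter, decide_eq_true_eq]
  tauto

lemma exists_filter_take (p : V → Bool) :
    ∀ (l : List V) (k : ℕ), ∃ i, i ≤ l.length ∧
      (l.filter p).take k = (l.take i).filter p ∧
      (k < (l.filter p).length → i < l.length) := by
  intro l
  induction l with
  | nil => intro k; exact ⟨0, le_refl 0, by simp, by simp⟩
  | cons a t ih =>
    intro k
    by_cases hpa : p a
    · cases k with
      | zero => exact ⟨0, Nat.zero_le _, by simp, fun _ => Nat.succ_pos _⟩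
      | succ k' =>
        obtain ⟨i, hi, heq, hlt⟩ := ih k'
        refine ⟨i + 1, by simpa using hi, ?_, ?_⟩
        · simp [List.filter_cons, hpa, heq]
        · intro hk
          have hk' : k' < (t.filter p).length := by
            simpa [List.filter_cons, hpa] using hk
          exact Nat.succ_lt_succ (hlt hk')
    · obtain ⟨i, hi, heq, hlt⟩ := ih k
      refine ⟨i + 1, by simpa using hi, ?_, ?_⟩
      · simp [List.filter_cons, hpa, heq]
      · intro hk
        have hk' : k < (t.filter p).length := by
          simpa [List.filter_cons, hpa] using hk
        exact Nat.succ_lt_succ (hlt hk')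

lemma chain_le (w : V → V → ℝ) (hw0 : ∀ u v, 0 ≤ w u v) (hsym : ∀ u v, w u v = w v u)
    (hdiag : ∀ v, w v v = 0) (X Y : Finset V) (hXY : X ⊆ Y)
    (L : List V) (j : ℕ) (hjL : j ≤ L.length)
    (hα : ∀ i < j, boundarySize w (X ∪ (L.take i).toFinset) = boundarySize w X)
    (hlast : ∀ (h : j - 1 < L.length), L.get ⟨j - 1, h⟩ ∉ Y) :
    ∀ i ≤ j, boundarySize w (Y ∪ (L.take i).toFinset) - boundarySize w Y ≤
      boundarySize w (X ∪ (L.take i).toFinset) - boundarySize w X := by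
  intro i
  induction i with
  | zero => intro _; simp
  | succ n ih =>
    intro hsn
    have hn : n ≤ j := Nat.le_of_succ_le hsn
    have ihn := ih hn
    have hnL : n < L.length := lt_of_lt_of_le hsn hjL
    have htake : (L.take (n + 1)).toFinset = insert (L.get ⟨n, hnL⟩) (L.take n).toFinset := by
      rw [List.take_succ, List.getElem?_eq_getElem hnL, List.toFinset_append]
      ext a
      simp [List.get_eq_getElem, or_comm]
    rw [htake, Finset.union_insert, Finset.union_insert]
    by_cases hvY : L.get ⟨n, hnL⟩ ∈ Y ∪ (L.take n).toFinset
    · rw [Finset.insert_eq_self.2 hvY]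
      by_cases hvX : L.get ⟨n, hnL⟩ ∈ X ∪ (L.take n).toFinset
      · rw [Finset.insert_eq_self.2 hvX]; exact ihn
      · have hvY' : L.get ⟨n, hnL⟩ ∈ Y := by
          rcases Finset.mem_union.1 hvY with h | h
          · exact h
          · exact absurd (Finset.mem_union_right X h) hvX
        rcases eq_or_lt_of_le hsn with hj' | hj'
        · exfalso
          subst hj'
          exact hlast hnL hvY'
        · have e1 := hα n (by omega)
          have e2 : boundarySize w (insert (L.get ⟨n, hnL⟩) (X ∪ (L.take n).toFinset)) =
              boundarySize w X := by
            rw [← Finset.union_insert, ← htake]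
            exact hα (n + 1) hj'
          rw [e2]
          linarith [ihn, e1]
    · have hvX : L.get ⟨n, hnL⟩ ∉ X ∪ (L.take n).toFinset := fun h =>
        hvY (Finset.union_subset_union hXY (Finset.Subset.refl _) h)
      rw [boundary_insert w hsym hdiag _ _ hvY, boundary_insert w hsym hdiag _ _ hvX]
      have hm := slope_mono w hw0 (X ∪ (L.take n).toFinset) (Y ∪ (L.take n).toFinset)
        (Finset.union_subset_union hXY (Finset.Subset.refl _)) (L.get ⟨n, hnL⟩)
      linarith [ihn]

lemma aux_case (w : V → V → ℝ) (hw0 : ∀ u v, 0 ≤ w u v) (hsym : ∀ u v, w u v = w v u)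
    (hdiag : ∀ v, w v v = 0) (A Y : Finset V) (hAY : A ⊆ Y) (hY : PinchConvex w Y)
    (L : List V) (j : ℕ) (hjL : j ≤ L.length) (hj0 : j ≠ 0)
    (hα : ∀ i < j, boundarySize w (A ∪ (L.take i).toFinset) = boundarySize w A)
    (hPj : boundarySize w (A ∪ (L.take j).toFinset) < boundarySize w A)
    (hlast : ∀ (h : j - 1 < L.length), L.get ⟨j - 1, h⟩ ∉ Y) : False := by
  have key := chain_le w hw0 hsym hdiag A Y hAY L j hjL hα hlast
  set p : V → Bool := fun x => decide (x ∉ Y) with hp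
  set LB := (L.take j).filter p with hLB
  have hmem : ∀ x ∈ LB, x ∉ Y := by
    intro x hx
    have h := List.mem_filter.1 hx
    simpa [hp] using h.2
  have hdecY : boundarySize w (Y ∪ LB.toFinset) < boundarySize w Y := by
    have h1 : Y ∪ LB.toFinset = Y ∪ (L.take j).toFinset := by
      rw [hLB, hp]; exact union_filter_toFinset Y (L.take j)
    rw [h1]
    have hk := key j (le_refl j)
    linarith
  obtain ⟨k, hk, hgt⟩ := hY LB hmem hdecY
  obtain ⟨i, hiL, heq, hilt⟩ := exists_filter_take p (L.take j) k
  have hiLt : i < j := by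
    have h2 := hilt (by rw [← hLB]; exact hk)
    have h3 : (L.take j).length = j := by
      rw [List.length_take]; omega
    omega
  have htt : (L.take j).take i = L.take i := by
    rw [List.take_take]
    congr 1
    omega
  have hset : Y ∪ (LB.take k).toFinset = Y ∪ (L.take i).toFinset := by
    rw [hLB, heq, htt, hp]
    exact union_filter_toFinset Y (L.take i)
  have hle : boundarySize w (Y ∪ (LB.take k).toFinset) ≤ boundarySize w Y := by
    rw [hset]
    have h4 := key i (le_of_lt hiLt)
    have h5 := hα i hiLt
    linarith
  linarith

/-- The intersection of two pinch convex vertex sets is pinch convex. -/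
theorem pinchConvex_inter (w : V → V → ℝ)
    (hw0 : ∀ u v, 0 ≤ w u v) (hsym : ∀ u v, w u v = w v u)
    (hdiag : ∀ v, w v v = 0) (B C : Finset V)
    (hB : PinchConvex w B) (hC : PinchConvex w C) :
    PinchConvex w (B ∩ C) := by
  intro L hL hdec
  by_contra hcon
  push_neg at hcon
  classical
  have hPlen : boundarySize w ((B ∩ C) ∪ (L.take L.length).toFinset) < boundarySize w (B ∩ C) := by
    rw [List.take_length]; exact hdec
  have hex : ∃ n, boundarySize w ((B ∩ C) ∪ (L.take n).toFinset) < boundarySize w (B ∩ C) :=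
    ⟨L.length, hPlen⟩
  set j := Nat.find hex with hj
  have hjspec : boundarySize w ((B ∩ C) ∪ (L.take j).toFinset) < boundarySize w (B ∩ C) :=
    Nat.find_spec hex
  have hjle : j ≤ L.length := Nat.find_le hPlen
  have hj0 : j ≠ 0 := by
    intro h
    rw [h] at hjspec
    simp at hjspec
  have hα : ∀ i < j, boundarySize w ((B ∩ C) ∪ (L.take i).toFinset) = boundarySize w (B ∩ C) := by
    intro i hi
    have h1 := hcon i (lt_of_lt_of_le hi hjle)
    have h2 := Nat.find_min hex hi
    push_neg at h2
    exact le_antisymm h1 h2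
  have hlt : j - 1 < L.length := by omega
  have hvmem : L.get ⟨j - 1, hlt⟩ ∈ L := L.get_mem ⟨j - 1, hlt⟩
  have hvA := hL _ hvmem
  rw [Finset.mem_inter] at hvA
  by_cases hvB : L.get ⟨j - 1, hlt⟩ ∈ B
  · have hvC : L.get ⟨j - 1, hlt⟩ ∉ C := fun h => hvA ⟨hvB, h⟩
    exact aux_case w hw0 hsym hdiag (B ∩ C) C Finset.inter_subset_right hC L j hjle hj0 hα
      hjspec (fun _ => hvC)
  · exact aux_case w hw0 hsym hdiag (B ∩ C) B Finset.inter_subset_left hB L j hjle hj0 hα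
      hjspec (fun _ => hvB)
end

section
/- If an ordering o of the vertices of G has a weakly reducible maximum witnessed by indices i, j, k with k ≤ i (i.e., s_{i,k} > 0 and s_{i,k} − s_{i,i+1} − 2a_{k,i+1} > 0, with no local maxima or minima strictly between k and i), then shifting vertex k to position i+1 produces an ordering o′ with w(o′) < w(o) in lexicographic order. -/
open Finset

variable {V : Type*} [Fintype V] [DecidableEq V]

/-- The vertex in (0-indexed) position `n` of the ordering `o`. -/
def vert {N : ℕ} [NeZero N] (o : Fin N ≃ V) (n : ℕ) : V := o (Fin.ofNat N n)

/-- `A_i`: the set of the first `i` vertices of the ordering `o`. -/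
def levelSet {N : ℕ} (o : Fin N ≃ V) (i : ℕ) : Finset V :=
  Finset.univ.filter fun x => (o.symm x : ℕ) < i

/-- `b_i`: the width of the ordering `o` at level `i`. -/
def levelWidth (w : V → V → ℝ) {N : ℕ} (o : Fin N ≃ V) (i : ℕ) : ℝ :=
  boundarySize w (levelSet o i)

/-- `s_{i,j}` (with `j` 0-indexed): the pinchSlope of the vertex in position `j`
with respect to the set `A_i` of the first `i` vertices. -/
def sl (w : V → V → ℝ) {N : ℕ} [NeZero N] (o : Fin N ≃ V) (i j : ℕ) : ℝ :=
  pinchSlope w (levelSet o i) (vert o j)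

/-- The width of an ordering: the list of all the level widths, rearranged
in non-increasing order (compared lexicographically). -/
noncomputable def widthList (w : V → V → ℝ) {N : ℕ} (o : Fin N ≃ V) : List ℝ :=
  ((List.range (N + 1)).map (levelWidth w o)).insertionSort (· ≥ ·)

/-- `[p,q]` is a locally minimal flat of the ordering `o`. -/
def IsMinimalFlat (w : V → V → ℝ) {N : ℕ} (o : Fin N ≃ V) (p q : ℕ) : Prop :=
  0 < p ∧ p ≤ q ∧ q < N ∧
  (∀ r, p ≤ r → r ≤ q → levelWidth w o r = levelWidth w o p) ∧
  levelWidth w o p < levelWidth w o (p - 1) ∧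
  levelWidth w o p < levelWidth w o (q + 1)

/-- `[p,q]` is a locally maximal flat of the ordering `o`. -/
def IsMaximalFlat (w : V → V → ℝ) {N : ℕ} (o : Fin N ≃ V) (p q : ℕ) : Prop :=
  0 < p ∧ p ≤ q ∧ q < N ∧
  (∀ r, p ≤ r → r ≤ q → levelWidth w o r = levelWidth w o p) ∧
  levelWidth w o (p - 1) < levelWidth w o p ∧
  levelWidth w o (q + 1) < levelWidth w o p

/-- `m` is a local minimum: it lies in a locally minimal flat. -/
def IsLocalMinLevel (w : V → V → ℝ) {N : ℕ} (o : Fin N ≃ V) (m : ℕ) : Prop :=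
  ∃ p q, IsMinimalFlat w o p q ∧ p ≤ m ∧ m ≤ q

/-- The locally maximal flat `[i,j]` is weakly reducible.  Here `jm` is the
right end of the preceding minimal flat and `ip` the left end of the following
minimal flat, with no local minima strictly in between; the witness index `k`
(0-indexed vertex position, so paper index `k+1`) satisfies condition (1) or
condition (2) of the definition. -/
def WeaklyReducibleAt (w : V → V → ℝ) {N : ℕ} [NeZero N] (o : Fin N ≃ V) (i j : ℕ) : Prop :=
  ∃ jm ip : ℕ,
    (∃ im, IsMinimalFlat w o im jm) ∧ (∃ jp, IsMinimalFlat w o ip jp) ∧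
    jm < i ∧ j < ip ∧
    (∀ m, jm < m → m < ip → ¬ IsLocalMinLevel w o m) ∧
    ∃ k, jm ≤ k ∧ k < ip ∧
      ((k < i ∧ 0 < sl w o i k ∧
          0 < sl w o i k - sl w o i i - 2 * w (vert o k) (vert o i)) ∨
       (j ≤ k ∧ sl w o j k < 0 ∧
          0 < -(sl w o j k) + sl w o j (j - 1) - 2 * w (vert o k) (vert o (j - 1))))

/-- An ordering is strongly irreducible if none of its locally maximal flats
is weakly reducible. -/
def StronglyIrreducible (w : V → V → ℝ) {N : ℕ} [NeZero N] (o : Fin N ≃ V) : Prop :=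
  ∀ i j, IsMaximalFlat w o i j → ¬ WeaklyReducibleAt w o i j


section WidthAux

open Fin.NatCast

lemma lex_lt_of_multiset {α : Type*} [LinearOrder α] :
    ∀ (l₂ l₁ : List α) (C : Multiset α) {S S' : Multiset α} {a : α},
    (l₁ : Multiset α) = C + S' → (l₂ : Multiset α) = C + S →
    l₁.Pairwise (· ≥ ·) → l₂.Pairwise (· ≥ ·) →
    a ∈ S → (∀ x ∈ S', x < a) → List.Lex (· < ·) l₁ l₂ := by
  intro l₂
  induction l₂ with
  | nil =>
    intro l₁ C S S' a h₁ h₂ _ _ ha _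
    exfalso
    have : a ∈ (([] : List α) : Multiset α) := by
      rw [h₂]; exact Multiset.mem_add.mpr (Or.inr ha)
    simp at this
  | cons b t₂ ih =>
    intro l₁ C S S' a h₁ h₂ hs₁ hs₂ ha hS'
    have hab : a ≤ b := by
      have : a ∈ ((b :: t₂ : List α) : Multiset α) := by
        rw [h₂]; exact Multiset.mem_add.mpr (Or.inr ha)
      rw [Multiset.mem_coe, List.mem_cons] at this
      rcases this with h | h
      · exact h.le
      · exact (List.pairwise_cons.mp hs₂).1 a h
    cases l₁ with
    | nil => exact List.Lex.nil
    | cons c t₁ =>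
      have hc : c ∈ C + S' := by
        rw [← h₁]; exact Multiset.mem_coe.mpr List.mem_cons_self
      have hcb : c ≤ b := by
        rcases Multiset.mem_add.mp hc with h | h
        · have : c ∈ ((b :: t₂ : List α) : Multiset α) := by
            rw [h₂]; exact Multiset.mem_add.mpr (Or.inl h)
          rw [Multiset.mem_coe, List.mem_cons] at this
          rcases this with h | h
          · exact h.le
          · exact (List.pairwise_cons.mp hs₂).1 c h
        · exact ((hS' c h).trans_le hab).le
      rcases lt_or_eq_of_le hcb with h | rfl
      · exact List.Lex.rel h
      · have hbC : c ∈ C := by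
          rcases Multiset.mem_add.mp hc with h | h
          · exact h
          · exact absurd (hS' c h) (not_lt.mpr hab)
        have ht₁ : (t₁ : Multiset α) = C.erase c + S' := by
          have : (c ::ₘ (t₁ : Multiset α)).erase c = (C + S').erase c := by
            rw [Multiset.cons_coe, h₁]
          rwa [Multiset.erase_cons_head, Multiset.erase_add_left_pos _ hbC] at this
        have ht₂ : (t₂ : Multiset α) = C.erase c + S := by
          have : (c ::ₘ (t₂ : Multiset α)).erase c = (C + S).erase c := by
            rw [Multiset.cons_coe, h₂]
          rwa [Multiset.erase_cons_head, Multiset.erase_add_left_pos _ hbC] at this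
        exact List.Lex.cons (ih t₁ (C.erase c) ht₁ ht₂
          (List.pairwise_cons.mp hs₁).2 (List.pairwise_cons.mp hs₂).2 ha hS')

lemma boundarySize_insert (w : V → V → ℝ) (hsym : ∀ u v, w u v = w v u)
    {A : Finset V} {v : V} (hv : v ∉ A) :
    boundarySize w (insert v A) = boundarySize w A + pinchSlope w A v - w v v := by
  have hvc : v ∈ Aᶜ := Finset.mem_compl.mpr hv
  unfold boundarySize pinchSlope
  rw [Finset.sum_insert hv, Finset.compl_insert]
  rw [Finset.sum_erase_eq_sub hvc]
  have h1 : ∀ u ∈ A, ∑ x ∈ Aᶜ.erase v, w u x = ∑ x ∈ Aᶜ, w u x - w u v :=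
    fun u _ => Finset.sum_erase_eq_sub hvc
  rw [Finset.sum_congr rfl h1, Finset.sum_sub_distrib]
  have h2 : ∑ u ∈ A, w u v = ∑ u ∈ A, w v u := Finset.sum_congr rfl (fun u _ => hsym u v)
  rw [h2]; ring

lemma pinchSlope_insert (w : V → V → ℝ) {A : Finset V} {u : V} (hu : u ∉ A) (v : V) :
    pinchSlope w (insert u A) v = pinchSlope w A v - 2 * w v u := by
  have huc : u ∈ Aᶜ := Finset.mem_compl.mpr hu
  unfold pinchSlope
  rw [Finset.compl_insert, Finset.sum_erase_eq_sub huc, Finset.sum_insert hu]; ring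

lemma pinchSlope_erase (w : V → V → ℝ) {A : Finset V} {v : V} (hv : v ∈ A) :
    pinchSlope w (A.erase v) v = pinchSlope w A v + 2 * w v v := by
  have hvc : v ∉ Aᶜ := by simp [hv]
  unfold pinchSlope
  rw [Finset.compl_erase, Finset.sum_insert hvc, Finset.sum_erase_eq_sub hv]; ring

lemma boundarySize_erase (w : V → V → ℝ) (hsym : ∀ u v, w u v = w v u)
    {A : Finset V} {v : V} (hv : v ∈ A) :
    boundarySize w (A.erase v) = boundarySize w A - pinchSlope w A v - w v v := by
  have h := boundarySize_insert w hsym (Finset.notMem_erase v A)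
  rw [Finset.insert_erase hv, pinchSlope_erase w hv] at h
  linarith

lemma mem_levelSet {N : ℕ} (o : Fin N ≃ V) {x : V} {m : ℕ} :
    x ∈ levelSet o m ↔ ((o.symm x : Fin N) : ℕ) < m := by
  simp [levelSet]

lemma symm_vert {N : ℕ} [NeZero N] (o : Fin N ≃ V) {j : ℕ} (h : j < N) :
    ((o.symm (vert o j) : Fin N) : ℕ) = j := by
  simp [vert, Fin.val_cast_of_lt h]

lemma vert_not_mem {N : ℕ} [NeZero N] (o : Fin N ≃ V) {m : ℕ} (h : m < N) :
    vert o m ∉ levelSet o m := by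
  rw [mem_levelSet, symm_vert o h]; omega

lemma vert_mem_levelSet {N : ℕ} [NeZero N] (o : Fin N ≃ V) {j m : ℕ} (hj : j < N)
    (hjm : j < m) : vert o j ∈ levelSet o m := by
  rw [mem_levelSet, symm_vert o hj]; exact hjm

lemma levelSet_succ {N : ℕ} [NeZero N] (o : Fin N ≃ V) {m : ℕ} (h : m < N) :
    levelSet o (m + 1) = insert (vert o m) (levelSet o m) := by
  ext x
  rw [Finset.mem_insert, mem_levelSet, mem_levelSet]
  constructor
  · intro hx
    rcases Nat.lt_succ_iff_lt_or_eq.mp hx with h' | h'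
    · exact Or.inr h'
    · left
      have : o.symm x = (m : Fin N) := by
        apply Fin.ext; rw [h', Fin.val_cast_of_lt h]
      exact (Equiv.symm_apply_eq o).mp this
  · rintro (rfl | h')
    · rw [symm_vert o h]; omega
    · omega

lemma levelSet_shift_low {N : ℕ} [NeZero N] (o o' : Fin N ≃ V) {k : ℕ}
    (ho'1 : ∀ p : Fin N, (p : ℕ) < k → o' p = o p)
    {m : ℕ} (hm : m ≤ k) : levelSet o' m = levelSet o m := by
  ext x
  rw [mem_levelSet, mem_levelSet]
  constructor
  · intro hx
    have hx' : o' (o'.symm x) = x := o'.apply_symm_apply x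
    rw [ho'1 _ (lt_of_lt_of_le hx hm)] at hx'
    have h2 : o.symm x = o'.symm x := (Equiv.symm_apply_eq o).mpr hx'.symm
    rw [h2]; exact hx
  · intro hx
    have hx' : o (o.symm x) = x := o.apply_symm_apply x
    have h2 : o'.symm x = o.symm x :=
      (Equiv.symm_apply_eq o').mpr (by rw [ho'1 _ (lt_of_lt_of_le hx hm)]; exact hx'.symm)
    rw [h2]; exact hx

lemma levelSet_shift_mid {N : ℕ} [NeZero N] (o o' : Fin N ≃ V) {k i : ℕ}
    (hki : k < i) (hiN : i < N)
    (ho'1 : ∀ p : Fin N, (p : ℕ) < k → o' p = o p)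
    (ho'2 : ∀ p : Fin N, k ≤ (p : ℕ) → (p : ℕ) < i → o' p = vert o ((p : ℕ) + 1))
    {m : ℕ} (hm1 : k < m) (hm2 : m ≤ i) :
    levelSet o' m = (levelSet o (m + 1)).erase (vert o k) := by
  ext x
  rw [Finset.mem_erase, mem_levelSet, mem_levelSet]
  constructor
  · intro hx
    have hx' : o' (o'.symm x) = x := o'.apply_symm_apply x
    by_cases hpk : ((o'.symm x : Fin N) : ℕ) < k
    · rw [ho'1 _ hpk] at hx'
      have hv : ((o.symm x : Fin N) : ℕ) = ((o'.symm x : Fin N) : ℕ) :=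
        congrArg Fin.val ((Equiv.symm_apply_eq o).mpr hx'.symm)
      refine ⟨fun he => ?_, by omega⟩
      have hk : ((o.symm x : Fin N) : ℕ) = k := by rw [he]; exact symm_vert o (by omega)
      omega
    · push_neg at hpk
      have hpi : ((o'.symm x : Fin N) : ℕ) < i := lt_of_lt_of_le hx hm2
      rw [ho'2 _ hpk hpi] at hx'
      have hv := symm_vert o (show ((o'.symm x : Fin N) : ℕ) + 1 < N by omega)
      rw [hx'] at hv
      refine ⟨fun he => ?_, by omega⟩
      have hk : ((o.symm x : Fin N) : ℕ) = k := by rw [he]; exact symm_vert o (by omega)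
      omega
  · rintro ⟨hne, hlt⟩
    have hq : o (o.symm x) = x := o.apply_symm_apply x
    by_cases h1 : ((o.symm x : Fin N) : ℕ) < k
    · have h2 : o'.symm x = o.symm x :=
        (Equiv.symm_apply_eq o').mpr (by rw [ho'1 _ h1]; exact hq.symm)
      rw [h2]; omega
    · push_neg at h1
      have hqk : ((o.symm x : Fin N) : ℕ) ≠ k := by
        intro he
        apply hne
        have h3 : o.symm x = ((k : ℕ) : Fin N) :=
          Fin.ext (by rw [he, Fin.val_cast_of_lt (by omega)])
        rw [← hq, h3]; rfl
      have hq2 : k < ((o.symm x : Fin N) : ℕ) := lt_of_le_of_ne h1 (Ne.symm hqk)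
      set r : Fin N := ⟨((o.symm x : Fin N) : ℕ) - 1, by omega⟩ with hr
      have h4 : o' r = x := by
        rw [ho'2 r (by show k ≤ ((o.symm x : Fin N) : ℕ) - 1; omega)
          (by show ((o.symm x : Fin N) : ℕ) - 1 < i; omega)]
        have h5 : ((r : ℕ) + 1) = ((o.symm x : Fin N) : ℕ) := by
          show ((o.symm x : Fin N) : ℕ) - 1 + 1 = _; omega
        rw [h5]
        show o ((((o.symm x : Fin N) : ℕ) : Fin N)) = x
        rw [Fin.cast_val_eq_self (o.symm x)]; exact hq
      have h6 : o'.symm x = r := (Equiv.symm_apply_eq o').mpr h4.symm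
      rw [h6]
      show ((o.symm x : Fin N) : ℕ) - 1 < m
      omega

lemma levelSet_shift_high {N : ℕ} [NeZero N] (o o' : Fin N ≃ V) {k i : ℕ}
    (hki : k < i) (hiN : i < N)
    (ho'1 : ∀ p : Fin N, (p : ℕ) < k → o' p = o p)
    (ho'2 : ∀ p : Fin N, k ≤ (p : ℕ) → (p : ℕ) < i → o' p = vert o ((p : ℕ) + 1))
    (ho'3 : vert o' i = vert o k)
    (ho'4 : ∀ p : Fin N, i < (p : ℕ) → o' p = o p)
    {m : ℕ} (hm : i < m) : levelSet o' m = levelSet o m := by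
  ext x
  rw [mem_levelSet, mem_levelSet]
  constructor
  · intro hx
    have hx' : o' (o'.symm x) = x := o'.apply_symm_apply x
    rcases lt_or_ge ((o'.symm x : Fin N) : ℕ) k with h1 | h1
    · rw [ho'1 _ h1] at hx'
      have hv : ((o.symm x : Fin N) : ℕ) = ((o'.symm x : Fin N) : ℕ) :=
        congrArg Fin.val ((Equiv.symm_apply_eq o).mpr hx'.symm)
      omega
    · rcases lt_or_ge ((o'.symm x : Fin N) : ℕ) i with h2 | h2
      · rw [ho'2 _ h1 h2] at hx'
        have hv := symm_vert o (show ((o'.symm x : Fin N) : ℕ) + 1 < N by omega)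
        rw [hx'] at hv
        omega
      · rcases eq_or_lt_of_le h2 with h3 | h3
        · have h4 : o'.symm x = ((i : ℕ) : Fin N) :=
            Fin.ext (by rw [Fin.val_cast_of_lt hiN]; omega)
          have h5 : x = vert o' i := by
            show x = o' ((i : ℕ) : Fin N)
            rw [← h4]; exact hx'.symm
          rw [h5, ho'3, symm_vert o (by omega)]; omega
        · rw [ho'4 _ h3] at hx'
          have hv : ((o.symm x : Fin N) : ℕ) = ((o'.symm x : Fin N) : ℕ) :=
            congrArg Fin.val ((Equiv.symm_apply_eq o).mpr hx'.symm)
          omega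
  · intro hx
    have hq : o (o.symm x) = x := o.apply_symm_apply x
    rcases lt_or_ge ((o.symm x : Fin N) : ℕ) k with h1 | h1
    · have h2 : o'.symm x = o.symm x :=
        (Equiv.symm_apply_eq o').mpr (by rw [ho'1 _ h1]; exact hq.symm)
      rw [h2]; omega
    · rcases eq_or_lt_of_le h1 with h2 | h2
      · have h3 : x = vert o k := by
          show x = o ((k : ℕ) : Fin N)
          have h4 : o.symm x = ((k : ℕ) : Fin N) :=
            Fin.ext (by rw [Fin.val_cast_of_lt (show k < N by omega)]; omega)
          rw [← h4]; exact hq.symm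
        have h4 : o'.symm x = ((i : ℕ) : Fin N) := by
          rw [h3, ← ho'3]
          exact o'.symm_apply_apply _
        rw [h4, Fin.val_cast_of_lt hiN]; omega
      · rcases lt_or_ge ((o.symm x : Fin N) : ℕ) (i + 1) with h3 | h3
        · set r : Fin N := ⟨((o.symm x : Fin N) : ℕ) - 1, by omega⟩ with hr
          have h4 : o' r = x := by
            rw [ho'2 r (by show k ≤ ((o.symm x : Fin N) : ℕ) - 1; omega)
              (by show ((o.symm x : Fin N) : ℕ) - 1 < i; omega)]
            have h5 : ((r : ℕ) + 1) = ((o.symm x : Fin N) : ℕ) := by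
              show ((o.symm x : Fin N) : ℕ) - 1 + 1 = _; omega
            rw [h5]
            show o ((((o.symm x : Fin N) : ℕ) : Fin N)) = x
            rw [Fin.cast_val_eq_self (o.symm x)]; exact hq
          have h6 : o'.symm x = r := (Equiv.symm_apply_eq o').mpr h4.symm
          rw [h6]
          show ((o.symm x : Fin N) : ℕ) - 1 < m
          omega
        · have h4 : o'.symm x = o.symm x :=
            (Equiv.symm_apply_eq o').mpr (by rw [ho'4 _ (by omega)]; exact hq.symm)
          rw [h4]; omega

end WidthAux

/-- Lemma (strongmaxlem), case `k ≤ i` (stated 0-indexed, so the witness vertex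
is in position `k < i`): if `s_{i,k} > 0`, `s_{i,k} - s_{i,i+1} - 2a_{k,i+1} > 0`,
and there are no local minima or maxima strictly between `k` and `i` (all the
intermediate slopes are nonnegative), then shifting the vertex in position `k`
to position `i` produces an ordering `o'` of strictly smaller width in
lexicographic order. -/

theorem width_lt_of_weakly_reducible_shift (w : V → V → ℝ)
    (hw0 : ∀ u v, 0 ≤ w u v) (hsym : ∀ u v, w u v = w v u)
    (hdiag : ∀ v, w v v = 0) {N : ℕ} [NeZero N] (o o' : Fin N ≃ V)
    (k i : ℕ) (hki : k < i) (hiN : i < N)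
    (hnomin : ∀ p, k < p → p < i → 0 ≤ sl w o p p)
    (hs1 : 0 < sl w o i k)
    (hs2 : 0 < sl w o i k - sl w o i i - 2 * w (vert o k) (vert o i))
    (ho'1 : ∀ p : Fin N, (p : ℕ) < k → o' p = o p)
    (ho'2 : ∀ p : Fin N, k ≤ (p : ℕ) → (p : ℕ) < i → o' p = vert o ((p : ℕ) + 1))
    (ho'3 : vert o' i = vert o k)
    (ho'4 : ∀ p : Fin N, i < (p : ℕ) → o' p = o p) :
    List.Lex (· < ·) (widthList w o') (widthList w o) := by
  classical
  have hkN : k < N := hki.trans hiN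
  have hsl_succ : ∀ j m : ℕ, m < N →
      sl w o (m + 1) j = sl w o m j - 2 * w (vert o j) (vert o m) := by
    intro j m hm
    unfold sl
    rw [levelSet_succ o hm, pinchSlope_insert w (vert_not_mem o hm)]
  have hlw_succ : ∀ m : ℕ, m < N →
      levelWidth w o (m + 1) = levelWidth w o m + sl w o m m := by
    intro m hm
    unfold levelWidth sl
    rw [levelSet_succ o hm, boundarySize_insert w hsym (vert_not_mem o hm), hdiag]
    ring
  have hsl_anti : ∀ m q : ℕ, m ≤ q → q ≤ N → sl w o q k ≤ sl w o m k := by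
    intro m q hmq hqN
    induction q, hmq using Nat.le_induction with
    | base => exact le_refl _
    | succ q hq ih =>
      rw [hsl_succ k q (by omega)]
      have h1 := hw0 (vert o k) (vert o q)
      have h2 := ih (by omega)
      linarith
  have hb_mono : ∀ m q : ℕ, k < m → m ≤ q → q ≤ i → levelWidth w o m ≤ levelWidth w o q := by
    intro m q hkm hmq hqi
    induction q, hmq using Nat.le_induction with
    | base => exact le_refl _
    | succ q hq ih =>
      have h1 : levelWidth w o (q + 1) = levelWidth w o q + sl w o q q :=
        hlw_succ q (by omega)
      have h2 : 0 ≤ sl w o q q := hnomin q (by omega) (by omega)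
      have h3 := ih (by omega)
      linarith
  have hb'_eq : ∀ m : ℕ, k < m → m ≤ i →
      levelWidth w o' m = levelWidth w o (m + 1) - sl w o (m + 1) k := by
    intro m h1 h2
    unfold levelWidth
    rw [levelSet_shift_mid o o' hki hiN ho'1 ho'2 h1 h2]
    have hvk : vert o k ∈ levelSet o (m + 1) := vert_mem_levelSet o hkN (by omega)
    rw [boundarySize_erase w hsym hvk, hdiag]
    show boundarySize w (levelSet o (m + 1)) - pinchSlope w (levelSet o (m + 1)) (vert o k) - 0
      = boundarySize w (levelSet o (m + 1)) - sl w o (m + 1) k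
    unfold sl; ring
  have hkey : ∀ m : ℕ, k < m → m ≤ i → levelWidth w o' m < levelWidth w o i := by
    intro m h1 h2
    rw [hb'_eq m h1 h2]
    rcases lt_or_eq_of_le h2 with h3 | rfl
    · have hs : sl w o i k ≤ sl w o (m + 1) k := hsl_anti (m + 1) i (by omega) (by omega)
      have hb : levelWidth w o (m + 1) ≤ levelWidth w o i :=
        hb_mono (m + 1) i (by omega) (by omega) (le_refl _)
      linarith
    · rw [hsl_succ k m hiN, hlw_succ m hiN]
      linarith
  -- multiset bookkeeping
  set P : ℕ → Prop := fun m => k < m ∧ m ≤ i with hPdef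
  have hPdec : DecidablePred P := fun m => instDecidableAnd
  set R : Multiset ℕ := ((List.range (N + 1) : List ℕ) : Multiset ℕ) with hRdef
  set C : Multiset ℝ := Multiset.map (levelWidth w o) (R.filter (fun m => ¬ P m)) with hCdef
  set S : Multiset ℝ := Multiset.map (levelWidth w o) (R.filter P) with hSdef
  set S' : Multiset ℝ := Multiset.map (levelWidth w o') (R.filter P) with hS'def
  have hsplit : ∀ f : ℕ → ℝ, Multiset.map f R
      = Multiset.map f (R.filter P) + Multiset.map f (R.filter (fun m => ¬ P m)) := by
    intro f
    rw [← Multiset.map_add, Multiset.filter_add_not]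
  have hCeq : Multiset.map (levelWidth w o') (R.filter (fun m => ¬ P m)) = C := by
    rw [hCdef]
    apply Multiset.map_congr rfl
    intro m hm
    have hm' := Multiset.mem_filter.mp hm
    have hnP : ¬ (k < m ∧ m ≤ i) := hm'.2
    unfold levelWidth
    rcases le_or_gt m k with h | h
    · rw [levelSet_shift_low o o' ho'1 h]
    · have him : i < m := by omega
      rw [levelSet_shift_high o o' hki hiN ho'1 ho'2 ho'3 ho'4 him]
  have hcoe : ∀ o₀ : Fin N ≃ V, ((widthList w o₀ : List ℝ) : Multiset ℝ)
      = Multiset.map (levelWidth w o₀) R := by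
    intro o₀
    have h1 : ((widthList w o₀ : List ℝ) : Multiset ℝ)
        = (((List.range (N + 1)).map (levelWidth w o₀) : List ℝ) : Multiset ℝ) :=
      Multiset.coe_eq_coe.mpr (List.perm_insertionSort _ _)
    rw [h1, hRdef]
    simp [Multiset.map_coe]
  have e1 : ((widthList w o' : List ℝ) : Multiset ℝ) = C + S' := by
    rw [hcoe o', hsplit (levelWidth w o'), hCeq, hS'def, add_comm]
  have e2 : ((widthList w o : List ℝ) : Multiset ℝ) = C + S := by
    rw [hcoe o, hsplit (levelWidth w o), hCdef, hSdef, add_comm]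
  have ha : levelWidth w o i ∈ S := by
    rw [hSdef]
    refine Multiset.mem_map.mpr ⟨i, Multiset.mem_filter.mpr ⟨?_, ⟨hki, le_refl i⟩⟩, rfl⟩
    rw [hRdef]
    exact Multiset.mem_coe.mpr (List.mem_range.mpr (by omega))
  have hS' : ∀ x ∈ S', x < levelWidth w o i := by
    intro x hx
    rw [hS'def] at hx
    obtain ⟨m, hm, rfl⟩ := Multiset.mem_map.mp hx
    have hm' := Multiset.mem_filter.mp hm
    exact hkey m hm'.2.1 hm'.2.2
  have hsort1 : (widthList w o').Pairwise (· ≥ ·) := List.pairwise_insertionSort _ _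
  have hsort2 : (widthList w o).Pairwise (· ≥ ·) := List.pairwise_insertionSort _ _
  exact lex_lt_of_multiset (widthList w o) (widthList w o') C e1 e2 hsort1 hsort2 ha hS'
end

section
/- If every vertex v of a set B has strictly negative slope with respect to B (i.e., the weight from v into B strictly exceeds the weight from v out of B), then B is pinch concave. -/
open Finset

variable {V : Type*} [Fintype V] [DecidableEq V]

lemma boundary_erase_aux (w : V → V → ℝ)
    (hsym : ∀ u v, w u v = w v u) (hdiag : ∀ v, w v v = 0)
    (B : Finset V) (v : V) (hv : v ∈ B) :
    boundarySize w (B.erase v) = boundarySize w B - pinchSlope w B v := by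
  have hvnc : v ∉ Bᶜ := by simp [hv]
  have hcompl : (B.erase v)ᶜ = insert v Bᶜ := Finset.compl_erase
  have hBsum : boundarySize w B
      = ∑ u ∈ B.erase v, ∑ x ∈ Bᶜ, w u x + ∑ x ∈ Bᶜ, w v x := by
    rw [boundarySize, ← Finset.add_sum_erase _ _ hv]; ring
  have hBslope : ∑ x ∈ B, w v x = ∑ u ∈ B.erase v, w u v := by
    rw [← Finset.add_sum_erase _ _ hv, hdiag, zero_add]
    exact Finset.sum_congr rfl fun u _ => hsym v u
  rw [boundarySize, hcompl]
  have : ∀ u ∈ B.erase v, ∑ x ∈ insert v Bᶜ, w u x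
      = w u v + ∑ x ∈ Bᶜ, w u x := fun u _ => Finset.sum_insert hvnc
  rw [Finset.sum_congr rfl this, Finset.sum_add_distrib, hBsum, pinchSlope, hBslope]
  ring

/-- If every vertex of `B` has strictly negative pinchSlope with respect to `B`,
then `B` is pinch concave. -/
theorem pinchConcave_of_neg_slopes (w : V → V → ℝ)
    (hw0 : ∀ u v, 0 ≤ w u v) (hsym : ∀ u v, w u v = w v u)
    (hdiag : ∀ v, w v v = 0) (B : Finset V)
    (hneg : ∀ v ∈ B, pinchSlope w B v < 0) :
    PinchConcave w B := by
  intro L hL hdec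
  have herase : ∀ v ∈ B, boundarySize w B < boundarySize w (B \ {v}) := by
    intro v hv
    rw [Finset.sdiff_singleton_eq_erase, boundary_erase_aux w hsym hdiag B v hv]
    linarith [hneg v hv]
  match L with
  | [] => simp at hdec
  | [a] =>
    exfalso
    have ha := hL a (by simp)
    have := herase a ha
    simp only [List.toFinset_cons, List.toFinset_nil, Finset.insert_empty] at hdec
    linarith
  | a :: b :: rest =>
    refine ⟨1, by simp, ?_⟩
    have ha := hL a (by simp)
    simpa using herase a ha
end
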